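/- Let n ≥ 1 be an integer, p ∈ (0,1), and let X be a Binomial(n,p) random variable. Then for every real a with 0 ≤ a ≤ p: | log₂ P(X ≤ n·a) + n·KL(a‖p) | ≤ 4·log₂(n+1) + max(0, log₂(p/(1-p))). -/

import Mathlib

open MeasureTheory Filter

noncomputable def binEnt (p : ℝ) : ℝ :=
  -(p * Real.logb 2 p) - (1 - p) * Real.logb 2 (1 - p)

noncomputable def klBin (a b : ℝ) : ℝ :=
  a * Real.logb 2 (a / b) + (1 - a) * Real.logb 2 ((1 - a) / (1 - b))


lemma sum_binom (n : ℕ) (t : ℝ) :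
    (∑ m ∈ Finset.range (n + 1), t ^ m * (1 - t) ^ (n - m) * (n.choose m : ℝ)) = 1 := by
  rw [← add_pow]; norm_num

lemma term_le_one (n k : ℕ) (hk : k ∈ Finset.range (n+1)) (t : ℝ) (h0 : 0 ≤ t) (h1 : t ≤ 1) :
    t ^ k * (1 - t) ^ (n - k) * (n.choose k : ℝ) ≤ 1 := by
  have h1t : (0:ℝ) ≤ 1 - t := by linarith
  calc t ^ k * (1 - t) ^ (n - k) * (n.choose k : ℝ)
      ≤ ∑ m ∈ Finset.range (n + 1), t ^ m * (1 - t) ^ (n - m) * (n.choose m : ℝ) :=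
        Finset.single_le_sum (f := fun i => t ^ i * (1 - t) ^ (n - i) * (n.choose i : ℝ))
          (fun i _ => by positivity) hk
    _ = 1 := sum_binom n t

/-- step inequality in ℕ -/
lemma step_nat_down (n m k : ℕ) (hmk : m ≤ k) (hkn : k < n) :
    n.choose (k+1) * m ≤ n.choose k * (n - m) := by
  have h := Nat.choose_succ_right_eq n k
  have h2 : n.choose (k+1) * m * (k+1) ≤ n.choose k * (n - m) * (k+1) := by
    have : n.choose (k+1) * m * (k+1) = n.choose k * ((n-k) * m) := by
      rw [mul_right_comm, h]; ring
    rw [this, mul_assoc]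
    refine Nat.mul_le_mul_left _ ?_
    calc (n-k) * m ≤ (n-m) * m := Nat.mul_le_mul_right _ (Nat.sub_le_sub_left hmk n)
      _ ≤ (n-m) * (k+1) := Nat.mul_le_mul_left _ (by omega)
  exact Nat.le_of_mul_le_mul_right h2 (Nat.succ_pos k)

lemma step_nat_up (n m k : ℕ) (hkm : k + 1 ≤ m) (hmn : m ≤ n) :
    n.choose k * (n - m) ≤ n.choose (k+1) * m := by
  have h := Nat.choose_succ_right_eq n k
  have h2 : n.choose k * (n - m) * (k+1) ≤ n.choose (k+1) * m * (k+1) := by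
    have heq : n.choose (k+1) * m * (k+1) = n.choose k * ((n-k) * m) := by
      rw [mul_right_comm, h]; ring
    rw [heq, mul_assoc]
    refine Nat.mul_le_mul_left _ ?_
    calc (n-m) * (k+1) ≤ (n-k) * (k+1) := Nat.mul_le_mul_right _ (Nat.sub_le_sub_left (by omega) n)
      _ ≤ (n-k) * m := Nat.mul_le_mul_left _ hkm
  exact Nat.le_of_mul_le_mul_right h2 (Nat.succ_pos k)

noncomputable def Fb (n : ℕ) (t : ℝ) (k : ℕ) : ℝ := t ^ k * (1 - t) ^ (n - k) * (n.choose k : ℝ)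

lemma one_sub_div_cast (n m : ℕ) (hmn : m ≤ n) (hn : 0 < n) :
    1 - (m:ℝ)/n = ((n - m : ℕ) : ℝ)/n := by
  have hn' : (n:ℝ) ≠ 0 := Nat.cast_ne_zero.mpr hn.ne'
  rw [Nat.cast_sub hmn]
  field_simp

lemma key_ineq_down (n m k : ℕ) (hmn : m ≤ n) (hmk : m ≤ k) (hkn : k < n) (hn : 0 < n) :
    (n.choose (k+1) : ℝ) * ((m:ℝ)/n) ≤ (n.choose k : ℝ) * (1 - (m:ℝ)/n) := by
  rw [one_sub_div_cast n m hmn hn, ← mul_div_assoc, ← mul_div_assoc]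
  have h := step_nat_down n m k hmk hkn
  have h' : ((n.choose (k+1) : ℝ)) * (m:ℝ) ≤ ((n.choose k : ℝ)) * (((n - m : ℕ)):ℝ) := by
    exact_mod_cast h
  gcongr

lemma key_ineq_up (n m k : ℕ) (hkm : k + 1 ≤ m) (hmn : m ≤ n) (hn : 0 < n) :
    (n.choose k : ℝ) * (1 - (m:ℝ)/n) ≤ (n.choose (k+1) : ℝ) * ((m:ℝ)/n) := by
  rw [one_sub_div_cast n m hmn hn, ← mul_div_assoc, ← mul_div_assoc]
  have h := step_nat_up n m k hkm hmn
  have h' : ((n.choose k : ℝ)) * (((n - m : ℕ)):ℝ) ≤ ((n.choose (k+1) : ℝ)) * (m:ℝ) := by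
    exact_mod_cast h
  gcongr

lemma Fb_step_down (n m k : ℕ) (hmn : m ≤ n) (hmk : m ≤ k) (hkn : k < n) :
    Fb n ((m:ℝ)/n) (k+1) ≤ Fb n ((m:ℝ)/n) k := by
  have hn : 0 < n := by omega
  set t := (m:ℝ)/n with ht
  have ht0 : 0 ≤ t := by positivity
  have ht1 : t ≤ 1 := by
    rw [ht, div_le_one (by exact_mod_cast hn)]; exact_mod_cast hmn
  have hc : 0 ≤ t ^ k * (1 - t) ^ (n - (k+1)) := by
    have : (0:ℝ) ≤ 1 - t := by linarith
    positivity
  have e1 : n - k = (n - (k+1)) + 1 := by omega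
  have key := key_ineq_down n m k hmn hmk hkn hn
  calc Fb n t (k+1) = ((n.choose (k+1) : ℝ) * t) * (t ^ k * (1 - t) ^ (n - (k+1))) := by
        rw [Fb, pow_succ]; ring
    _ ≤ ((n.choose k : ℝ) * (1 - t)) * (t ^ k * (1 - t) ^ (n - (k+1))) :=
        mul_le_mul_of_nonneg_right key hc
    _ = Fb n t k := by rw [Fb, e1, pow_succ]; ring

lemma Fb_step_up (n m k : ℕ) (hkm : k + 1 ≤ m) (hmn : m ≤ n) :
    Fb n ((m:ℝ)/n) k ≤ Fb n ((m:ℝ)/n) (k+1) := by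
  have hn : 0 < n := by omega
  set t := (m:ℝ)/n with ht
  have ht0 : 0 ≤ t := by positivity
  have ht1 : t ≤ 1 := by
    rw [ht, div_le_one (by exact_mod_cast hn)]; exact_mod_cast hmn
  have hc : 0 ≤ t ^ k * (1 - t) ^ (n - (k+1)) := by
    have : (0:ℝ) ≤ 1 - t := by linarith
    positivity
  have e1 : n - k = (n - (k+1)) + 1 := by omega
  have key := key_ineq_up n m k hkm hmn hn
  calc Fb n t k = ((n.choose k : ℝ) * (1 - t)) * (t ^ k * (1 - t) ^ (n - (k+1))) := by
        rw [Fb, e1, pow_succ]; ring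
    _ ≤ ((n.choose (k+1) : ℝ) * t) * (t ^ k * (1 - t) ^ (n - (k+1))) :=
        mul_le_mul_of_nonneg_right key hc
    _ = Fb n t (k+1) := by rw [Fb, pow_succ]; ring

lemma Fb_down_all (n m : ℕ) (hmn : m ≤ n) :
    ∀ j, m + j ≤ n → Fb n ((m:ℝ)/n) (m + j) ≤ Fb n ((m:ℝ)/n) m := by
  intro j
  induction j with
  | zero => intro _; simp
  | succ d ih =>
    intro h
    have h1 : Fb n ((m:ℝ)/n) (m + d + 1) ≤ Fb n ((m:ℝ)/n) (m + d) :=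
      Fb_step_down n m (m + d) hmn (by omega) (by omega)
    have : m + (d + 1) = m + d + 1 := by omega
    rw [this]
    exact h1.trans (ih (by omega))

lemma Fb_up_all (n m : ℕ) (hmn : m ≤ n) :
    ∀ j k, k + j = m → Fb n ((m:ℝ)/n) k ≤ Fb n ((m:ℝ)/n) m := by
  intro j
  induction j with
  | zero => intro k hk; rw [← hk]; simp
  | succ d ih =>
    intro k hk
    have h1 : Fb n ((m:ℝ)/n) k ≤ Fb n ((m:ℝ)/n) (k+1) :=
      Fb_step_up n m k (by omega) hmn
    exact h1.trans (ih (k+1) (by omega))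

lemma Fb_le_max (n m k : ℕ) (hmn : m ≤ n) (hk : k ≤ n) :
    Fb n ((m:ℝ)/n) k ≤ Fb n ((m:ℝ)/n) m := by
  rcases le_or_gt k m with h | h
  · exact Fb_up_all n m hmn (m - k) k (by omega)
  · have := Fb_down_all n m hmn (k - m) (by omega)
    have e : m + (k - m) = k := by omega
    rwa [e] at this

lemma one_le_max_term (n m : ℕ) (hmn : m ≤ n) :
    1 ≤ ((n:ℝ) + 1) * Fb n ((m:ℝ)/n) m := by
  have hn : 0 < n ∨ n = 0 := by omega
  have ht0 : 0 ≤ (m:ℝ)/n := by positivity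
  have ht1 : (m:ℝ)/n ≤ 1 := by
    rcases Nat.eq_zero_or_pos n with h0 | h0
    · subst h0; simp at hmn; subst hmn; norm_num
    · rw [div_le_one (by exact_mod_cast h0)]; exact_mod_cast hmn
  calc (1:ℝ) = ∑ j ∈ Finset.range (n+1), Fb n ((m:ℝ)/n) j := (sum_binom n _).symm
    _ ≤ ∑ j ∈ Finset.range (n+1), Fb n ((m:ℝ)/n) m := by
        refine Finset.sum_le_sum fun j hj => ?_
        exact Fb_le_max n m j hmn (by simp at hj; omega)
    _ = ((n:ℝ) + 1) * Fb n ((m:ℝ)/n) m := by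
        rw [Finset.sum_const, Finset.card_range]
        push_cast; ring


noncomputable def Lnat (p t : ℝ) : ℝ :=
  t * Real.log (t / p) + (1 - t) * Real.log ((1 - t) / (1 - p))

lemma mul_log_div_split (t c : ℝ) (ht : 0 ≤ t) (hc : 0 < c) :
    t * Real.log (t / c) = t * Real.log t - t * Real.log c := by
  rcases eq_or_lt_of_le ht with h | h
  · simp [← h]
  · rw [Real.log_div h.ne' hc.ne']; ring

/-- Lnat in expanded form -/
lemma Lnat_eq (p t : ℝ) (hp0 : 0 < p) (hp1 : p < 1) (ht0 : 0 ≤ t) (ht1 : t ≤ 1) :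
    Lnat p t = t * Real.log t - t * Real.log p
      + (1 - t) * Real.log (1 - t) - (1 - t) * Real.log (1 - p) := by
  rw [Lnat, mul_log_div_split t p ht0 hp0, mul_log_div_split (1 - t) (1 - p) (by linarith) (by linarith)]
  ring

/-- the key identity: exp(-n Lnat(k/n)) * (k/n)^k ((n-k)/n)^(n-k) = p^k (1-p)^(n-k), for k < n -/
lemma exp_Lnat_identity (n k : ℕ) (hkn : k < n) (p : ℝ) (hp0 : 0 < p) (hp1 : p < 1) :
    Real.exp (-(n:ℝ) * Lnat p ((k:ℝ)/n))
      * (((k:ℝ)/n) ^ k * (1 - (k:ℝ)/n) ^ (n - k)) = p ^ k * (1 - p) ^ (n - k) := by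
  have hn : 0 < n := by omega
  have hn' : (0:ℝ) < n := by exact_mod_cast hn
  have hq : (0:ℝ) < 1 - p := by linarith
  have h1t : 1 - (k:ℝ)/n = ((n - k : ℕ) : ℝ)/n := by
    rw [Nat.cast_sub hkn.le]; field_simp
  have hnk : (0:ℝ) < ((n - k : ℕ) : ℝ) := by
    have : 0 < n - k := by omega
    exact_mod_cast this
  rcases Nat.eq_zero_or_pos k with rfl | hk
  · -- k = 0
    simp only [Nat.cast_zero, zero_div, pow_zero, one_mul, Nat.sub_zero]
    have : Lnat p 0 = - Real.log (1 - p) := by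
      rw [Lnat]; simp [Real.log_div one_ne_zero hq.ne']
    rw [this]
    norm_num
    rw [Real.exp_nat_mul, Real.exp_log hq]
  · -- 0 < k < n
    have hx0 : (0:ℝ) < (k:ℝ)/n := by positivity
    have hx1' : (0:ℝ) < 1 - (k:ℝ)/n := by rw [h1t]; positivity
    have hL : -(n:ℝ) * Lnat p ((k:ℝ)/n)
        = Real.log ((p ^ k * (1 - p) ^ (n - k)) / (((k:ℝ)/n) ^ k * (1 - (k:ℝ)/n) ^ (n - k))) := by
      rw [Real.log_div (by positivity) (by positivity), Real.log_mul (by positivity) (by positivity),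
        Real.log_mul (by positivity) (by positivity), Real.log_pow, Real.log_pow, Real.log_pow,
        Real.log_pow, Lnat, Real.log_div hx0.ne' hp0.ne', Real.log_div hx1'.ne' hq.ne']
      have hk' : (n:ℝ) * ((k:ℝ)/n) = (k:ℝ) := by field_simp
      have hnk' : (n:ℝ) * (1 - (k:ℝ)/n) = ((n - k : ℕ) : ℝ) := by
        rw [h1t]; field_simp
      have hcast : ((n - k : ℕ) : ℝ) = (n:ℝ) - (k:ℝ) := by
        rw [Nat.cast_sub hkn.le]
      rw [hcast] at hnk'
      have hcast2 : ((n - k : ℕ) : ℝ) = (n:ℝ) - (k:ℝ) := hcast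
      push_cast [Nat.cast_sub hkn.le]
      linear_combination (Real.log p - Real.log ((k:ℝ)/n)) * hk'
        + (Real.log (1-p) - Real.log (1 - (k:ℝ)/n)) * hnk'
    rw [hL, Real.exp_log (by positivity)]
    exact div_mul_cancel₀ _ (by positivity)

lemma Lnat_antitone (p : ℝ) (hp0 : 0 < p) (hp1 : p < 1) :
    AntitoneOn (Lnat p) (Set.Icc 0 p) := by
  have hq : (0:ℝ) < 1 - p := by linarith
  set G : ℝ → ℝ := fun t => t * Real.log t - t * Real.log p
      + (1 - t) * Real.log (1 - t) - (1 - t) * Real.log (1 - p) with hG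
  have hcont : ContinuousOn G (Set.Icc 0 p) := by
    apply Continuous.continuousOn
    have h1 : Continuous fun t : ℝ => t * Real.log t := Real.continuous_mul_log
    have h2 : Continuous fun t : ℝ => (1 - t) * Real.log (1 - t) :=
      Real.continuous_mul_log.comp (continuous_const.sub continuous_id)
    fun_prop
  have hderiv : ∀ t ∈ interior (Set.Icc (0:ℝ) p), deriv G t ≤ 0 := by
    intro t ht
    rw [interior_Icc] at ht
    obtain ⟨ht0, htp⟩ := ht
    have ht1 : t < 1 := lt_of_lt_of_le htp hp1.le
    have h1t : (0:ℝ) < 1 - t := by linarith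
    have hd : HasDerivAt G ((Real.log t + 1) - Real.log p
        + (-(Real.log (1 - t) + 1)) - (-Real.log (1 - p))) t := by
      have d1 : HasDerivAt (fun t : ℝ => t * Real.log t) (Real.log t + 1) t :=
        Real.hasDerivAt_mul_log ht0.ne'
      have d2 : HasDerivAt (fun t : ℝ => (1 - t) * Real.log (1 - t))
          (-(Real.log (1 - t) + 1)) t := by
        have hinner : HasDerivAt (fun t : ℝ => 1 - t) (-1) t := by
          simpa using (hasDerivAt_id' t).const_sub (1:ℝ)
        have := (Real.hasDerivAt_mul_log h1t.ne').comp t hinner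
        simpa [mul_comm, Function.comp_def] using this
      have d3 : HasDerivAt (fun t : ℝ => t * Real.log p) (Real.log p) t := by
        simpa using (hasDerivAt_id t).mul_const (Real.log p)
      have d4 : HasDerivAt (fun t : ℝ => (1 - t) * Real.log (1 - p)) (-Real.log (1 - p)) t := by
        have hinner : HasDerivAt (fun t : ℝ => 1 - t) (-1) t := by
          simpa using (hasDerivAt_id' t).const_sub (1:ℝ)
        simpa using hinner.mul_const (Real.log (1 - p))
      exact ((d1.sub d3).add d2).sub d4
    rw [hd.deriv]
    have hlog1 : Real.log t ≤ Real.log p := Real.log_le_log ht0 htp.le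
    have hlog2 : Real.log (1 - p) ≤ Real.log (1 - t) :=
      Real.log_le_log hq (by linarith)
    linarith
  have hanti : AntitoneOn G (Set.Icc 0 p) := by
    apply AntitoneOn.mono (antitoneOn_of_deriv_nonpos (convex_Icc 0 p) hcont ?_ hderiv) le_rfl
    · intro t ht
      rw [interior_Icc] at ht
      obtain ⟨ht0, htp⟩ := ht
      have h1t : (0:ℝ) < 1 - t := by linarith [hp1]
      apply DifferentiableAt.differentiableWithinAt
      have d1 : DifferentiableAt ℝ (fun t : ℝ => t * Real.log t) t :=
        (Real.hasDerivAt_mul_log ht0.ne').differentiableAt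
      have d2 : DifferentiableAt ℝ (fun t : ℝ => (1 - t) * Real.log (1 - t)) t := by
        have hinner : HasDerivAt (fun t : ℝ => 1 - t) (-1) t := by
          simpa using (hasDerivAt_id' t).const_sub (1:ℝ)
        exact (((Real.hasDerivAt_mul_log h1t.ne').comp t hinner)).differentiableAt
      fun_prop
  intro s hs t ht hst
  have hEq : ∀ u ∈ Set.Icc (0:ℝ) p, Lnat p u = G u := fun u hu =>
    Lnat_eq p u hp0 hp1 hu.1 (le_trans hu.2 hp1.le)
  rw [hEq s hs, hEq t ht]
  exact hanti hs ht hst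

/-- -t log t ≤ 1 - t for t > 0 -/
lemma neg_mul_log_le (t : ℝ) (ht : 0 < t) : -(t * Real.log t) ≤ 1 - t := by
  have h := Real.log_le_sub_one_of_pos (x := 1/t) (by positivity)
  have h2 : Real.log (1/t) = -Real.log t := by
    rw [one_div, Real.log_inv]
  rw [h2] at h
  have := mul_le_mul_of_nonneg_left h ht.le
  calc -(t * Real.log t) = t * (-Real.log t) := by ring
    _ ≤ t * (1/t - 1) := this
    _ = 1 - t := by field_simp

lemma gapA (n : ℕ) (hn : 1 ≤ n) (x a : ℝ) (hx0 : 0 ≤ x) (hxa : x ≤ a) (ha1 : a < 1)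
    (hax : a ≤ x + 1/n) :
    (n:ℝ) * (x * Real.log x - a * Real.log a) ≤ Real.log n + 1 := by
  have hn' : (0:ℝ) < n := by exact_mod_cast hn
  have hlogn : 0 ≤ Real.log n := Real.log_nonneg (by exact_mod_cast hn)
  rcases eq_or_lt_of_le (hx0.trans hxa) with h | ha0
  · -- a = 0 hence x = 0
    have hx : x = 0 := le_antisymm (by linarith) hx0
    rw [hx, ← h]
    norm_num; linarith
  · -- a > 0
    have hδ0 : 0 ≤ a - x := by linarith
    have hδn : (n:ℝ) * (a - x) ≤ 1 := by
      rw [mul_comm]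
      calc (a - x) * n ≤ (1/n) * n := by
            apply mul_le_mul_of_nonneg_right _ hn'.le
            linarith
        _ = 1 := by field_simp
    have hloga : Real.log a ≤ 0 := Real.log_nonpos ha0.le ha1.le
    -- x log x ≤ x log a
    have hstep : x * Real.log x ≤ x * Real.log a := by
      rcases eq_or_lt_of_le hx0 with h | h
      · rw [← h]; simp
      · exact mul_le_mul_of_nonneg_left (Real.log_le_log h hxa) hx0
    have hmain : (n:ℝ) * (x * Real.log x - a * Real.log a)
        ≤ (n:ℝ) * (a - x) * (-Real.log a) := by
      have : x * Real.log x - a * Real.log a ≤ (a - x) * (-Real.log a) := by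
        nlinarith [hstep]
      nlinarith [this, hn'.le]
    rcases le_or_gt (1/(n:ℝ)) a with hcase | hcase
    · -- a ≥ 1/n : -log a ≤ log n
      have hla : -Real.log a ≤ Real.log n := by
        have : Real.log (1/n) ≤ Real.log a := Real.log_le_log (by positivity) hcase
        rw [one_div, Real.log_inv] at this
        linarith
      have h1 : (n:ℝ) * (a - x) * (-Real.log a) ≤ 1 * Real.log n := by
        apply mul_le_mul hδn hla (by linarith) (by norm_num)
      linarith
    · -- a < 1/n : use n(a-x) ≤ n a and -t log t ≤ 1-t with t = n a... 
      have hna : (n:ℝ) * a ≤ 1 := by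
        calc (n:ℝ) * a ≤ (n:ℝ) * (1/n) := by
              apply mul_le_mul_of_nonneg_left hcase.le hn'.le
          _ = 1 := by field_simp
      have h1 : (n:ℝ) * (a - x) * (-Real.log a) ≤ (n:ℝ) * a * (-Real.log a) := by
        apply mul_le_mul_of_nonneg_right _ (by linarith)
        nlinarith
      have hlogsplit : Real.log ((n:ℝ) * a) = Real.log n + Real.log a :=
        Real.log_mul hn'.ne' ha0.ne'
      have h2 : (n:ℝ) * a * (-Real.log a) = (n:ℝ) * a * Real.log n
          + (-(((n:ℝ) * a) * Real.log ((n:ℝ)*a))) := by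
        rw [hlogsplit]; ring
      have h3 : -((n:ℝ) * a * Real.log ((n:ℝ)*a)) ≤ 1 := by
        have := neg_mul_log_le ((n:ℝ)*a) (by positivity)
        nlinarith
      have h4 : (n:ℝ) * a * Real.log n ≤ Real.log n := by
        nlinarith
      linarith
    
lemma gapB (n : ℕ) (hn : 1 ≤ n) (x a : ℝ) (hx0 : 0 ≤ x) (hxa : x ≤ a) (ha1 : a < 1)
    (hax : a ≤ x + 1/n) :
    (n:ℝ) * ((1-x) * Real.log (1-x) - (1-a) * Real.log (1-a)) ≤ 1 := by
  have hn' : (0:ℝ) < n := by exact_mod_cast hn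
  set u := 1 - a with hu
  set v := 1 - x with hv
  have hu0 : 0 < u := by simp [hu]; linarith
  have huv : u ≤ v := by simp [hu, hv]; linarith
  have hv1 : v ≤ 1 := by simp [hv]; linarith
  have hv0 : 0 < v := lt_of_lt_of_le hu0 huv
  have hlogv : Real.log v ≤ 0 := Real.log_nonpos (by linarith) hv1
  have h1 : v * Real.log v ≤ u * Real.log v := by nlinarith
  have h2 : Real.log v - Real.log u ≤ v/u - 1 := by
    have := Real.log_le_sub_one_of_pos (x := v/u) (div_pos hv0 hu0)
    rw [Real.log_div hv0.ne' hu0.ne'] at this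
    linarith
  have h3 : u * (Real.log v - Real.log u) ≤ v - u := by
    have := mul_le_mul_of_nonneg_left h2 hu0.le
    calc u * (Real.log v - Real.log u) ≤ u * (v/u - 1) := this
      _ = v - u := by field_simp
  have h4 : v * Real.log v - u * Real.log u ≤ v - u := by nlinarith
  have h5 : v - u ≤ 1/(n:ℝ) := by
    have he : v - u = a - x := by rw [hu, hv]; ring
    rw [he]; linarith
  calc (n:ℝ) * (v * Real.log v - u * Real.log u) ≤ (n:ℝ) * (1/(n:ℝ)) :=
        mul_le_mul_of_nonneg_left (h4.trans h5) hn'.le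
    _ = 1 := by field_simp

/-- full gap lemma -/
lemma gap_lemma (n : ℕ) (hn : 1 ≤ n) (p x a : ℝ) (hp0 : 0 < p) (hp1 : p < 1)
    (hx0 : 0 ≤ x) (hxa : x ≤ a) (hap : a ≤ p) (hax : a ≤ x + 1/n) :
    (n:ℝ) * (Lnat p x - Lnat p a)
      ≤ Real.log n + 2 + max 0 (Real.log (p / (1 - p))) := by
  have hn' : (0:ℝ) < n := by exact_mod_cast hn
  have hq : (0:ℝ) < 1 - p := by linarith
  have ha1 : a < 1 := lt_of_le_of_lt hap hp1
  have hA := gapA n hn x a hx0 hxa ha1 hax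
  have hB := gapB n hn x a hx0 hxa ha1 hax
  have hδ : (n:ℝ) * (a - x) * Real.log (p / (1 - p)) ≤ max 0 (Real.log (p / (1 - p))) := by
    have hδ0 : 0 ≤ (n:ℝ) * (a - x) := by
      apply mul_nonneg hn'.le; linarith
    have hδ1 : (n:ℝ) * (a - x) ≤ 1 := by
      calc (n:ℝ) * (a - x) ≤ (n:ℝ) * (1/(n:ℝ)) :=
            mul_le_mul_of_nonneg_left (by linarith) hn'.le
        _ = 1 := by field_simp
    rcases le_or_gt (Real.log (p / (1 - p))) 0 with h | h
    · calc (n:ℝ) * (a - x) * Real.log (p / (1 - p)) ≤ 0 := mul_nonpos_of_nonneg_of_nonpos hδ0 h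
        _ ≤ max 0 _ := le_max_left _ _
    · calc (n:ℝ) * (a - x) * Real.log (p / (1 - p)) ≤ 1 * Real.log (p / (1 - p)) :=
          mul_le_mul_of_nonneg_right hδ1 h.le
        _ = Real.log (p / (1 - p)) := one_mul _
        _ ≤ max 0 _ := le_max_right _ _
  have hexp : (n:ℝ) * (Lnat p x - Lnat p a)
      = (n:ℝ) * (x * Real.log x - a * Real.log a)
      + (n:ℝ) * ((1-x) * Real.log (1-x) - (1-a) * Real.log (1-a))
      + (n:ℝ) * (a - x) * Real.log (p / (1 - p)) := by
    rw [Lnat_eq p x hp0 hp1 hx0 (by linarith), Lnat_eq p a hp0 hp1 (by linarith) ha1.le,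
      Real.log_div hp0.ne' hq.ne']
    ring
  rw [hexp]
  linarith

/-- numeric: log n + 2 ≤ 3 log (n+1) for n ≥ 1 -/
lemma numeric_log (n : ℕ) (hn : 1 ≤ n) :
    Real.log n + 2 ≤ 3 * Real.log ((n:ℝ) + 1) := by
  rcases eq_or_lt_of_le hn with h | h
  · rw [← h]; norm_num
    have := Real.log_two_gt_d9
    linarith
  · -- n ≥ 2
    have h2 : (2:ℕ) ≤ n := h
    have h3 : (3:ℝ) ≤ (n:ℝ) + 1 := by
      have : (2:ℝ) ≤ (n:ℝ) := by exact_mod_cast h2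
      linarith
    have hlog3 : (1:ℝ) ≤ Real.log ((n:ℝ) + 1) := by
      rw [Real.le_log_iff_exp_le (by linarith)]
      have := Real.exp_one_lt_d9
      linarith
    have hmono : Real.log n ≤ Real.log ((n:ℝ) + 1) :=
      Real.log_le_log (by positivity) (by linarith)
    linarith


set_option maxHeartbeats 1000000 in
theorem binomial_tail_kl_bound
    (n : ℕ) (hn : 1 ≤ n) (p : ℝ) (hp0 : 0 < p) (hp1 : p < 1)
    (a : ℝ) (ha0 : 0 ≤ a) (hap : a ≤ p) :
    |Real.logb 2 (∑ k ∈ Finset.range (n + 1),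
        if (k : ℝ) ≤ n * a then (n.choose k : ℝ) * p ^ k * (1 - p) ^ (n - k) else 0)
      + n * klBin a p| ≤ 4 * Real.logb 2 (n + 1) + max 0 (Real.logb 2 (p / (1 - p))) := by
  have hn' : (0:ℝ) < n := by exact_mod_cast hn
  have hq : (0:ℝ) < 1 - p := by linarith
  have hlog2 : (0:ℝ) < Real.log 2 := Real.log_pos (by norm_num)
  set S : ℝ := ∑ k ∈ Finset.range (n + 1),
      if (k : ℝ) ≤ n * a then (n.choose k : ℝ) * p ^ k * (1 - p) ^ (n - k) else 0 with hS
  set m : ℕ := ⌊(n:ℝ) * a⌋₊ with hm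
  have hm_le : (m:ℝ) ≤ (n:ℝ) * a := Nat.floor_le (by positivity)
  have hm_lt : (n:ℝ) * a < (m:ℝ) + 1 := Nat.lt_floor_add_one _
  have hmn : m < n := by
    have : (m:ℝ) < (n:ℝ) := by
      calc (m:ℝ) ≤ (n:ℝ) * a := hm_le
        _ ≤ (n:ℝ) * p := by nlinarith
        _ < (n:ℝ) * 1 := by nlinarith
        _ = n := mul_one _
    exact_mod_cast this
  set x : ℝ := (m:ℝ)/(n:ℝ) with hx
  have hx0 : 0 ≤ x := by positivity
  have hxa : x ≤ a := by
    rw [hx, div_le_iff₀ hn']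
    nlinarith [hm_le]
  have hax : a ≤ x + 1/(n:ℝ) := by
    rw [hx, ← add_div, le_div_iff₀ hn']
    nlinarith [hm_lt]
  -- upper bound on S
  have hup : S ≤ ((n:ℝ) + 1) * Real.exp (-(n:ℝ) * Lnat p a) := by
    have hbound : ∀ k ∈ Finset.range (n+1),
        (if (k : ℝ) ≤ n * a then (n.choose k : ℝ) * p ^ k * (1 - p) ^ (n - k) else 0)
          ≤ Real.exp (-(n:ℝ) * Lnat p a) := by
      intro k hk
      split_ifs with hcond
      · have hkn : k < n := by
          have : (k:ℝ) < (n:ℝ) := by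
            calc (k:ℝ) ≤ (n:ℝ) * a := hcond
              _ ≤ (n:ℝ) * p := by nlinarith
              _ < (n:ℝ) := by nlinarith
          exact_mod_cast this
        have hkx0 : (0:ℝ) ≤ (k:ℝ)/n := by positivity
        have hkxa : (k:ℝ)/n ≤ a := by rw [div_le_iff₀ hn']; nlinarith [hcond]
        have hid := exp_Lnat_identity n k hkn p hp0 hp1
        have hterm := term_le_one n k hk ((k:ℝ)/n) hkx0
          (by rw [div_le_one hn']; exact_mod_cast hkn.le)
        have hLmono : Lnat p a ≤ Lnat p ((k:ℝ)/n) :=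
          Lnat_antitone p hp0 hp1 ⟨hkx0, hkxa.trans hap⟩ ⟨ha0, hap⟩ hkxa
        calc (n.choose k : ℝ) * p ^ k * (1 - p) ^ (n - k)
            = Real.exp (-(n:ℝ) * Lnat p ((k:ℝ)/n))
                * (((k:ℝ)/n) ^ k * (1 - (k:ℝ)/n) ^ (n - k) * (n.choose k : ℝ)) := by
              linear_combination (-(n.choose k : ℝ)) * hid
          _ ≤ Real.exp (-(n:ℝ) * Lnat p ((k:ℝ)/n)) * 1 :=
              mul_le_mul_of_nonneg_left hterm (Real.exp_nonneg _)
          _ = Real.exp (-(n:ℝ) * Lnat p ((k:ℝ)/n)) := mul_one _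
          _ ≤ Real.exp (-(n:ℝ) * Lnat p a) := by
              apply Real.exp_le_exp.mpr
              nlinarith [hLmono]
      · positivity
    calc S ≤ ∑ k ∈ Finset.range (n+1), Real.exp (-(n:ℝ) * Lnat p a) :=
          Finset.sum_le_sum hbound
      _ = ((n:ℝ) + 1) * Real.exp (-(n:ℝ) * Lnat p a) := by
          rw [Finset.sum_const, Finset.card_range]; push_cast; ring
  -- lower bound on S
  have hfm_pos : (0:ℝ) < (n.choose m : ℝ) * p ^ m * (1 - p) ^ (n - m) := by
    have : 0 < n.choose m := Nat.choose_pos hmn.le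
    positivity
  have hfm_le : (n.choose m : ℝ) * p ^ m * (1 - p) ^ (n - m) ≤ S := by
    have hmem : m ∈ Finset.range (n+1) := Finset.mem_range.mpr (by omega)
    have h := Finset.single_le_sum
      (f := fun k : ℕ => if (k : ℝ) ≤ (n:ℝ) * a then (n.choose k : ℝ) * p ^ k * (1 - p) ^ (n - k) else 0)
      (fun i _ => by show 0 ≤ _; split_ifs with h
                     · positivity
                     · exact le_rfl) hmem
    rw [if_pos hm_le] at h
    exact h
  have hS_pos : 0 < S := lt_of_lt_of_le hfm_pos hfm_le
  have hlow : Real.exp (-(n:ℝ) * Lnat p x) ≤ ((n:ℝ) + 1) * S := by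
    have hid := exp_Lnat_identity n m hmn p hp0 hp1
    have hmax := one_le_max_term n m hmn.le
    rw [Fb] at hmax
    calc Real.exp (-(n:ℝ) * Lnat p x)
        = Real.exp (-(n:ℝ) * Lnat p x) * 1 := (mul_one _).symm
      _ ≤ Real.exp (-(n:ℝ) * Lnat p x)
            * (((n:ℝ) + 1) * (x ^ m * (1 - x) ^ (n - m) * (n.choose m : ℝ))) :=
          mul_le_mul_of_nonneg_left hmax (Real.exp_nonneg _)
      _ = ((n:ℝ) + 1) * ((Real.exp (-(n:ℝ) * Lnat p x) * (x ^ m * (1 - x) ^ (n - m)))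
            * (n.choose m : ℝ)) := by ring
      _ = ((n:ℝ) + 1) * ((p ^ m * (1 - p) ^ (n - m)) * (n.choose m : ℝ)) := by rw [hid]
      _ ≤ ((n:ℝ) + 1) * S := by
          apply mul_le_mul_of_nonneg_left _ (by positivity)
          calc (p ^ m * (1 - p) ^ (n - m)) * (n.choose m : ℝ)
              = (n.choose m : ℝ) * p ^ m * (1 - p) ^ (n - m) := by ring
            _ ≤ S := hfm_le
  -- gap and numeric
  have hgap := gap_lemma n hn p x a hp0 hp1 hx0 hxa hap hax
  have hnum := numeric_log n hn
  -- log bounds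
  have hlog_up : Real.log S + (n:ℝ) * Lnat p a ≤ Real.log ((n:ℝ)+1) := by
    have := Real.log_le_log hS_pos hup
    rw [Real.log_mul (by positivity) (Real.exp_ne_zero _), Real.log_exp] at this
    linarith
  have hlog_lo : -(4 * Real.log ((n:ℝ)+1) + max 0 (Real.log (p/(1-p))))
      ≤ Real.log S + (n:ℝ) * Lnat p a := by
    have h1 := Real.log_le_log (Real.exp_pos _) hlow
    rw [Real.log_exp, Real.log_mul (by positivity) hS_pos.ne'] at h1
    have h2 : (n:ℝ) * Lnat p x - (n:ℝ) * Lnat p a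
        ≤ Real.log n + 2 + max 0 (Real.log (p/(1-p))) := by
      have h2' := hgap
      rw [mul_sub] at h2'
      exact h2'
    have hlogn1 : 0 ≤ Real.log ((n:ℝ)+1) := Real.log_nonneg (by linarith)
    linarith
  -- convert to logb
  have hkl : klBin a p = Lnat p a / Real.log 2 := by
    rw [klBin, Lnat, Real.logb, Real.logb]; ring
  have hmaxb : max 0 (Real.logb 2 (p / (1 - p))) = max 0 (Real.log (p/(1-p))) / Real.log 2 := by
    rw [Real.logb]
    rcases le_or_gt (Real.log (p/(1-p))) 0 with h | h
    · rw [max_eq_left (div_nonpos_of_nonpos_of_nonneg h hlog2.le), max_eq_left h, zero_div]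
    · rw [max_eq_right (le_of_lt (div_pos h hlog2)), max_eq_right h.le]
  have hgoal_eq : Real.logb 2 S + (n:ℝ) * klBin a p
      = (Real.log S + (n:ℝ) * Lnat p a) / Real.log 2 := by
    rw [hkl, Real.logb]; ring
  have hrhs_eq : 4 * Real.logb 2 ((n:ℝ) + 1) + max 0 (Real.logb 2 (p / (1 - p)))
      = (4 * Real.log ((n:ℝ)+1) + max 0 (Real.log (p/(1-p)))) / Real.log 2 := by
    rw [hmaxb, Real.logb]; ring
  rw [hgoal_eq, hrhs_eq, abs_div, abs_of_pos hlog2, div_le_div_iff₀ hlog2 hlog2]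
  have habs : |Real.log S + (n:ℝ) * Lnat p a|
      ≤ 4 * Real.log ((n:ℝ)+1) + max 0 (Real.log (p/(1-p))) := by
    rw [abs_le]
    constructor
    · linarith
    · have hlogn1 : 0 ≤ Real.log ((n:ℝ)+1) := Real.log_nonneg (by linarith)
      have hmax0 : 0 ≤ max 0 (Real.log (p/(1-p))) := le_max_left _ _
      linarith
  nlinarith [habs, hlog2, abs_nonneg (Real.log S + (n:ℝ) * Lnat p a)]
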